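/- For a self-adjoint operator A ≥ λ₀E (λ₀ > 0) and |κ| < 2λ₀, the operator ξ⁴·P₀⁻¹(iξ + κ/2; A) has norm at most 1 for every ξ ∈ ℝ, where P₀(μ; A) = (-μE + A)(μE + A)³. -/

import Mathlib

/-- Scalar (spectral) version: the symbol ξ⁴ · P₀(iξ + κ/2; λ)⁻¹ has modulus at
most 1 for all ξ ∈ ℝ and λ ≥ λ₀, giving ‖ξ⁴ P₀⁻¹(iξ + κ/2; A)‖ ≤ 1. -/
theorem stmt_11 (lam0 : ℝ) (hlam0 : 0 < lam0) (κ : ℝ) (hκ : |κ| < 2 * lam0) :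
    ∀ ξ lam : ℝ, lam0 ≤ lam →
      ‖(ξ : ℂ) ^ 4 *
        ((-(Complex.I * ξ + κ / 2) + lam) *
          (Complex.I * ξ + κ / 2 + lam) ^ 3)⁻¹‖ ≤ 1 := by
  intro ξ lam hlam
  obtain ⟨hκ1, hκ2⟩ := abs_lt.mp hκ
  have ha : 0 < lam - κ / 2 := by linarith
  have hb : 0 < lam + κ / 2 := by linarith
  have h1 : ‖-(Complex.I * ξ + κ / 2) + lam‖
      = Real.sqrt ((lam - κ / 2) ^ 2 + ξ ^ 2) := by
    rw [Complex.norm_def]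
    congr 1
    simp [Complex.normSq_apply]
    ring
  have h2 : ‖Complex.I * ξ + κ / 2 + lam‖
      = Real.sqrt ((lam + κ / 2) ^ 2 + ξ ^ 2) := by
    rw [Complex.norm_def]
    congr 1
    simp [Complex.normSq_apply]
    ring
  have hs1 : |ξ| ≤ Real.sqrt ((lam - κ / 2) ^ 2 + ξ ^ 2) := by
    rw [← Real.sqrt_sq_eq_abs]
    exact Real.sqrt_le_sqrt (by nlinarith [sq_nonneg (lam - κ / 2)])
  have hs2 : |ξ| ≤ Real.sqrt ((lam + κ / 2) ^ 2 + ξ ^ 2) := by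
    rw [← Real.sqrt_sq_eq_abs]
    exact Real.sqrt_le_sqrt (by nlinarith [sq_nonneg (lam + κ / 2)])
  have habs : ‖(ξ : ℂ) ^ 4 *
        ((-(Complex.I * ξ + κ / 2) + lam) *
          (Complex.I * ξ + κ / 2 + lam) ^ 3)⁻¹‖
      = |ξ| ^ 4 / (Real.sqrt ((lam - κ / 2) ^ 2 + ξ ^ 2) *
          Real.sqrt ((lam + κ / 2) ^ 2 + ξ ^ 2) ^ 3) := by
    rw [norm_mul, norm_inv, norm_mul, norm_pow, norm_pow, h1, h2, div_eq_mul_inv]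
    simp
    ring
  rw [habs]
  have hden : |ξ| ^ 4 ≤ Real.sqrt ((lam - κ / 2) ^ 2 + ξ ^ 2) *
      Real.sqrt ((lam + κ / 2) ^ 2 + ξ ^ 2) ^ 3 := by
    have h4 : |ξ| ^ 4 = |ξ| * |ξ| ^ 3 := by ring
    rw [h4]
    exact mul_le_mul hs1 (pow_le_pow_left₀ (abs_nonneg ξ) hs2 3)
      (pow_nonneg (abs_nonneg ξ) 3) (Real.sqrt_nonneg _)
  exact div_le_one_of_le₀ hden (by positivity)
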